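/- arXiv:0909.0471 — 2 statements merged into one kernel-verified Lean document; each statement's English description precedes it below -/
import Mathlib

section
/- If the 24 ridges of the 4-cube are covered by four sets of ridges, none of which contains a pair of antipodal edges, then each set contains exactly six ridges and is either the set of all six ridges of a single facet, or an asterisk set Ast(v) for some vertex v. -/
namespace Cube

/-- A face of the `d`-cube: `none` = varying coordinate (X), `some b` = fixed at `b`. -/
abbrev Face (d : ℕ) := Fin d → Option Bool

/-- `F` is a `k`-face: exactly `k` varying coordinates. -/
def IsKFace {d : ℕ} (F : Face d) (k : ℕ) : Prop :=
  (Finset.univ.filter fun i => F i = none).card = k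

/-- `G` is a subface of `F`: `G` agrees with every fixed coordinate of `F`. -/
def Subface {d : ℕ} (G F : Face d) : Prop := ∀ i b, F i = some b → G i = some b

/-- Antipodal faces: same varying positions, opposite fixed values. -/
def Antipodal {d : ℕ} (F G : Face d) : Prop := ∀ i, G i = (F i).map (!·)

abbrev Vertex (d : ℕ) := Fin d → Bool

/-- The vertex `v` lies on the face `F`. -/
def VMem {d : ℕ} (v : Vertex d) (F : Face d) : Prop := ∀ i b, F i = some b → v i = b

/-- A set of faces contains the face `G` if `G` is a subface of one of its members. -/
def SetContains {d : ℕ} (A : Set (Face d)) (G : Face d) : Prop := ∃ F ∈ A, Subface G F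

end Cube

open Cube

section Aux

instance {d k} : DecidablePred (fun F : Face d => IsKFace F k) := fun _ => by
  unfold IsKFace; infer_instance
instance {d} (G F : Face d) : Decidable (Subface G F) := by unfold Subface; infer_instance
instance {d} (v : Vertex d) (F : Face d) : Decidable (VMem v F) := by unfold VMem; infer_instance

def Ridges : Finset (Face 4) := Finset.univ.filter (fun R => IsKFace R 2)
def mk2 (i j : Fin 4) (a b : Bool) : Face 4 :=
  fun k => if k = i then some a else if k = j then some b else none
def mk1 (i : Fin 4) (b : Bool) : Face 4 := fun k => if k = i then some b else none
def neg (e : Face 4) : Face 4 := fun k => (e k).map (!·)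
def facetF (i : Fin 4) (b : Bool) : Finset (Face 4) := Ridges.filter (fun R => R i = some b)
def starF (v : Vertex 4) : Finset (Face 4) :=
  Ridges.filter (fun R => ∀ k, R k ≠ none → R k = some (v k))
def fib (T : Finset (Face 4)) (s t : Fin 4) : Finset (Face 4) :=
  T.filter (fun R => R s ≠ none ∧ R t ≠ none)
def sl (R : Face 4) : Finset (Fin 4) := Finset.univ.filter (fun k => R k ≠ none)

theorem anti_neg (e : Face 4) : Antipodal e (neg e) := fun _ => rfl
theorem ridges_card : Ridges.card = 24 := by decide
theorem mem_Ridges : ∀ R : Face 4, R ∈ Ridges ↔ IsKFace R 2 := by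
  intro R; simp [Ridges]
theorem facetF_card : ∀ i b, (facetF i b).card = 6 := by decide
theorem starF_card : ∀ v, (starF v).card = 6 := by decide
theorem mk1_face3 : ∀ i b, IsKFace (mk1 i b) 3 := by decide
theorem mk2_swap : ∀ (i j : Fin 4) (a b : Bool), i ≠ j → mk2 i j a b = mk2 j i b a := by decide
theorem mk2_face2 : ∀ (i j : Fin 4) (a b : Bool), i ≠ j → IsKFace (mk2 i j a b) 2 := by decide
theorem exists_mk2 : ∀ R : Face 4, IsKFace R 2 → ∃ i j a b, i ≠ j ∧ R = mk2 i j a b := by decide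
theorem norm1 : ∀ (R : Face 4) (k : Fin 4), IsKFace R 2 → R k ≠ none →
    ∃ u c d, u ≠ k ∧ R = mk2 k u c d := by decide
theorem norm2 : ∀ (R : Face 4) (s t : Fin 4), s ≠ t → IsKFace R 2 → R s ≠ none → R t ≠ none →
    ∃ a b, R = mk2 s t a b := by decide
theorem I1e : ∀ (i j : Fin 4) (a b : Bool), i ≠ j → ∃ e : Face 4, IsKFace e 1 ∧
    Subface e (mk2 i j a b) ∧ Subface (neg e) (mk2 i j (!a) (!b)) := by decide
theorem I2e : ∀ (i j l : Fin 4) (a b d : Bool), i ≠ j → i ≠ l → j ≠ l → ∃ e : Face 4,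
    IsKFace e 1 ∧ Subface e (mk2 i j a b) ∧ Subface (neg e) (mk2 i l (!a) d) := by decide
theorem mk2_fst : ∀ (i j : Fin 4) (a b : Bool), mk2 i j a b i = some a := by decide
theorem mk2_snd : ∀ (i j : Fin 4) (a b : Bool), i ≠ j → mk2 i j a b j = some b := by decide
theorem mk2_ne : ∀ (i j : Fin 4) (a b : Bool) (k : Fin 4), mk2 i j a b k ≠ none →
    (k = i ∨ k = j) := by decide
theorem vals_inj : ∀ (i j : Fin 4) (a b a' b' : Bool), i ≠ j →
    mk2 i j a b = mk2 i j a' b' → a = a' ∧ b = b' := by decide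
theorem boolPairs : ∀ L : Finset (Bool × Bool),
    (∀ a b, (a,b) ∈ L → (!a,!b) ∈ L → False) → L.card ≤ 2 := by decide
theorem bool_ne : ∀ c b : Bool, ¬ some c = some b → c = !b := by decide
theorem bool_or : ∀ d β : Bool, d = β ∨ d = !β := by decide
theorem bool_ne' : ∀ a c : Bool, ¬ a = c → c = !a := by decide
theorem bool_not_self : ∀ b : Bool, b = !b → False := by decide
theorem bool_cases2 : ∀ c1 c2 d1 d2 : Bool, ¬(c1 = c2 ∧ d1 = d2) → ¬(c2 = !c1 ∧ d2 = !d1) →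
    (c2 = c1 ∧ d2 = !d1) ∨ (c2 = !c1 ∧ d2 = d1) := by decide
theorem four_distinct : ∀ a w x y k : Fin 4, a ≠ w → a ≠ x → a ≠ y → w ≠ x → w ≠ y → x ≠ y →
    (a = k ∨ w = k ∨ x = k ∨ y = k) := by decide
theorem pair_eq : ∀ i j i' j' : Fin 4, i ≠ j → i' ≠ j' →
    ({i',j'} : Finset (Fin 4)) = {i,j} → (i'=i ∧ j'=j) ∨ (i'=j ∧ j'=i) := by decide
theorem sl_card2 : ∀ R : Face 4, IsKFace R 2 → (sl R).card = 2 := by decide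
theorem sl_mk2 : ∀ (i j : Fin 4) (a b : Bool), i ≠ j → sl (mk2 i j a b) = {i,j} := by decide
theorem lab_mk2 : ∀ (s t : Fin 4) (a b : Bool), s ≠ t →
    ((mk2 s t a b s).getD true, (mk2 s t a b t).getD true) = (a, b) := by decide
theorem mem_facetF : ∀ (R : Face 4) (i : Fin 4) (b : Bool),
    R ∈ facetF i b ↔ (IsKFace R 2 ∧ R i = some b) := by
  intro R i b; simp [facetF, Ridges]
theorem mem_starF : ∀ (R : Face 4) (v : Vertex 4),
    R ∈ starF v ↔ (IsKFace R 2 ∧ ∀ k, R k ≠ none → R k = some (v k)) := by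
  intro R v; simp [starF, Ridges]
theorem subface_mk1 : ∀ (R : Face 4) (i : Fin 4) (b : Bool),
    Subface R (mk1 i b) ↔ R i = some b := by decide
theorem vmem_iff : ∀ (R : Face 4) (v : Vertex 4),
    VMem v R ↔ ∀ k, R k ≠ none → R k = some (v k) := by decide

end Aux

section Core

variable (T : Finset (Face 4))

theorem fib_le_two (h2 : ∀ R ∈ T, IsKFace R 2)
    (I1 : ∀ (i j : Fin 4) (a b : Bool), i ≠ j → mk2 i j a b ∈ T → mk2 i j (!a) (!b) ∈ T → False)
    (s t : Fin 4) (hst : s ≠ t) : (fib T s t).card ≤ 2 := by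
  have hsub : fib T s t ⊆ T := Finset.filter_subset _ _
  have hnorm : ∀ R ∈ fib T s t, ∃ a b, R = mk2 s t a b := by
    intro R hR
    rw [fib, Finset.mem_filter] at hR
    exact norm2 R s t hst (h2 R hR.1) hR.2.1 hR.2.2
  have hinj : Set.InjOn (fun R : Face 4 => ((R s).getD true, (R t).getD true)) (fib T s t) := by
    intro R hR R' hR' hEq
    obtain ⟨a, b, rfl⟩ := hnorm R (by simpa using hR)
    obtain ⟨a', b', rfl⟩ := hnorm R' (by simpa using hR')
    have hEq : ((mk2 s t a b s).getD true, (mk2 s t a b t).getD true)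
        = ((mk2 s t a' b' s).getD true, (mk2 s t a' b' t).getD true) := hEq
    rw [lab_mk2 s t a b hst, lab_mk2 s t a' b' hst] at hEq
    obtain ⟨rfl, rfl⟩ := Prod.mk.injEq .. ▸ hEq
    rfl
  rw [← Finset.card_image_of_injOn hinj]
  apply boolPairs
  intro a b hab hab'
  obtain ⟨R, hR, hRl⟩ := Finset.mem_image.1 hab
  obtain ⟨R', hR', hRl'⟩ := Finset.mem_image.1 hab'
  obtain ⟨a0, b0, rfl⟩ := hnorm R hR
  obtain ⟨a0', b0', rfl⟩ := hnorm R' hR'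
  have hRl : ((mk2 s t a0 b0 s).getD true, (mk2 s t a0 b0 t).getD true) = (a, b) := hRl
  have hRl' : ((mk2 s t a0' b0' s).getD true, (mk2 s t a0' b0' t).getD true) = (!a, !b) := hRl'
  rw [lab_mk2 s t a0 b0 hst] at hRl
  rw [lab_mk2 s t a0' b0' hst] at hRl'
  obtain ⟨rfl, rfl⟩ := Prod.mk.injEq .. ▸ hRl
  obtain ⟨rfl, rfl⟩ := Prod.mk.injEq .. ▸ hRl'
  exact I1 s t a0 b0 hst (hsub hR) (hsub hR')

end Core

section Key

variable {T : Finset (Face 4)}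
variable (h2 : ∀ R ∈ T, IsKFace R 2)
variable (I1 : ∀ (i j : Fin 4) (a b : Bool), i ≠ j → mk2 i j a b ∈ T → mk2 i j (!a) (!b) ∈ T → False)
variable (I2 : ∀ (i j l : Fin 4) (a b c d : Bool), i ≠ j → i ≠ l → j ≠ l →
    mk2 i j a b ∈ T → mk2 i l c d ∈ T → a = c)

include h2 I1 I2 in
theorem keyCase (α w : Fin 4) (hαw : α ≠ w) (b β : Bool)
    (hR1 : mk2 α w b β ∈ T) (hR2 : mk2 α w b (!β) ∈ T) :
    T.card ≤ 6 ∧ (T.card = 6 → ∃ i b', T = facetF i b') := by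
  have hwα : w ≠ α := hαw.symm
  -- rule A
  have ruleA : ∀ R ∈ T, R α ≠ none → R α = some b := by
    intro R hR hα
    obtain ⟨u, c, d, huα, rfl⟩ := norm1 R α (h2 R hR) hα
    rw [mk2_fst]
    by_cases huw : u = w
    · rw [huw] at hR
      by_contra hc
      have hcb : c = !b := bool_ne c b hc
      subst hcb
      rcases bool_or d β with hd | hd <;> rw [hd] at hR
      · refine I1 α w b (!β) hαw hR2 ?_
        rw [Bool.not_not]
        exact hR
      · exact I1 α w b β hαw hR1 hR
    · have := I2 α u w c d b β huα.symm hαw huw hR hR1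
      rw [this]
  -- rule B
  have ruleB : ∀ R ∈ T, R w ≠ none → R = mk2 α w b β ∨ R = mk2 α w b (!β) := by
    intro R hR hw
    obtain ⟨u, c, d, huw, rfl⟩ := norm1 R w (h2 R hR) hw
    by_cases huα : u = α
    · rw [huα] at hR ⊢
      rw [mk2_swap w α c d hwα] at hR ⊢
      have hd : mk2 α w d c α = some b := ruleA _ hR (by rw [mk2_fst]; simp)
      rw [mk2_fst] at hd
      obtain rfl : d = b := by injection hd
      rcases bool_or c β with rfl | rfl
      · exact Or.inl rfl
      · exact Or.inr rfl
    · exfalso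
      have e1 := I2 w u α c d β b huw.symm hwα huα hR (mk2_swap α w b β hαw ▸ hR1)
      have e2 := I2 w u α c d (!β) b huw.symm hwα huα hR (mk2_swap α w b (!β) hαw ▸ hR2)
      rw [e1] at e2
      exact bool_not_self β e2
  by_cases hall : ∀ R ∈ T, R α ≠ none
  · -- facet case
    have hsub : T ⊆ facetF α b := by
      intro R hR
      exact (mem_facetF R α b).2 ⟨h2 R hR, ruleA R hR (hall R hR)⟩
    constructor
    · exact le_trans (Finset.card_le_card hsub) (le_of_eq (facetF_card α b))
    · intro hc
      refine ⟨α, b, Finset.eq_of_subset_of_card_le hsub ?_⟩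
      rw [facetF_card, hc]
  · -- exists R3 with R3 α = none
    push_neg at hall
    obtain ⟨R3, hR3T, hR3α⟩ := hall
    obtain ⟨x, y, c, d, hxy, rfl⟩ := exists_mk2 R3 (h2 R3 hR3T)
    have hαx : α ≠ x := fun h => by rw [h, mk2_fst] at hR3α; simp at hR3α
    have hαy : α ≠ y := fun h => by rw [h, mk2_snd x y c d hxy] at hR3α; simp at hR3α
    have hR3w : mk2 x y c d w = none := by
      by_contra hw
      rcases ruleB _ hR3T hw with hE | hE <;>
        · rw [hE, mk2_fst] at hR3α; simp at hR3α
    have hwx : w ≠ x := fun h => by rw [h, mk2_fst] at hR3w; simp at hR3w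
    have hwy : w ≠ y := fun h => by rw [h, mk2_snd x y c d hxy] at hR3w; simp at hR3w
    -- subset of four fibers
    have husub : T ⊆ fib T α w ∪ fib T α x ∪ fib T α y ∪ fib T x y := by
      intro R hR
      have memfib : ∀ s t : Fin 4, R s ≠ none → R t ≠ none →
          R ∈ fib T s t := by
        intro s t hs ht
        rw [fib, Finset.mem_filter]
        exact ⟨hR, hs, ht⟩
      by_cases hw : R w ≠ none
      · rcases ruleB R hR hw with rfl | rfl <;>
          · simp only [Finset.mem_union]
            exact Or.inl <| Or.inl <| Or.inl <| memfib α w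
              (by rw [mk2_fst]; simp) (by rw [mk2_snd _ _ _ _ hαw]; simp)
      · rw [not_ne_iff] at hw
        obtain ⟨i', j', a', b', hij', rfl⟩ := exists_mk2 R (h2 R hR)
        have hi' : mk2 i' j' a' b' i' ≠ none := by rw [mk2_fst]; simp
        have hj' : mk2 i' j' a' b' j' ≠ none := by rw [mk2_snd _ _ _ _ hij']; simp
        have hiw : i' ≠ w := fun h => by rw [← h] at hw; exact hi' hw
        have hjw : j' ≠ w := fun h => by rw [← h] at hw; exact hj' hw
        simp only [Finset.mem_union]
        rcases four_distinct α w x y i' hαw hαx hαy hwx hwy hxy with rfl|rfl|rfl|rfl <;>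
          rcases four_distinct α w x y j' hαw hαx hαy hwx hwy hxy with rfl|rfl|rfl|rfl <;>
            first
              | exact absurd rfl hij'
              | exact absurd rfl hiw
              | exact absurd rfl hjw
              | exact Or.inl <| Or.inl <| Or.inr <| memfib _ _ hi' hj'
              | exact Or.inl <| Or.inl <| Or.inr <| memfib _ _ hj' hi'
              | exact Or.inl <| Or.inr <| memfib _ _ hi' hj'
              | exact Or.inl <| Or.inr <| memfib _ _ hj' hi'
              | exact Or.inr <| memfib _ _ hi' hj'
              | exact Or.inr <| memfib _ _ hj' hi'
    have hcard_le : T.card ≤ (fib T α w).card + (fib T α x).card + (fib T α y).card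
        + (fib T x y).card := by
      calc T.card ≤ (fib T α w ∪ fib T α x ∪ fib T α y ∪ fib T x y).card :=
            Finset.card_le_card husub
        _ ≤ (fib T α w ∪ fib T α x ∪ fib T α y).card + (fib T x y).card :=
            Finset.card_union_le _ _
        _ ≤ (fib T α w ∪ fib T α x).card + (fib T α y).card + (fib T x y).card := by
            have := Finset.card_union_le (fib T α w ∪ fib T α x) (fib T α y); omega
        _ ≤ (fib T α w).card + (fib T α x).card + (fib T α y).card + (fib T x y).card := by
            have := Finset.card_union_le (fib T α w) (fib T α x); omega
    -- fiber bounds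
    have hfαw : (fib T α w).card ≤ 2 := fib_le_two T h2 I1 α w hαw
    have hfxy : (fib T x y).card ≤ 2 := fib_le_two T h2 I1 x y hxy
    have hnormfib : ∀ s t : Fin 4, s ≠ t → ∀ R ∈ fib T s t, R ∈ T ∧ ∃ a0 b0, R = mk2 s t a0 b0 := by
      intro s t hst R hR
      rw [fib, Finset.mem_filter] at hR
      exact ⟨hR.1, norm2 R s t hst (h2 R hR.1) hR.2.1 hR.2.2⟩
    have hmemfib : ∀ (s t : Fin 4) (a0 b0 : Bool), s ≠ t → mk2 s t a0 b0 ∈ T →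
        mk2 s t a0 b0 ∈ fib T s t := by
      intro s t a0 b0 hst hm
      rw [fib, Finset.mem_filter]
      exact ⟨hm, by rw [mk2_fst]; simp, by rw [mk2_snd _ _ _ _ hst]; simp⟩
    have hfαx : (fib T α x).card ≤ 1 := by
      apply Finset.card_le_one.2
      intro R hR R' hR'
      obtain ⟨hRT, a1, b1, rfl⟩ := hnormfib α x hαx R hR
      obtain ⟨hRT', a2, b2, rfl⟩ := hnormfib α x hαx R' hR'
      have ha1 : a1 = b := by
        have := ruleA _ hRT (by rw [mk2_fst]; simp)
        rw [mk2_fst] at this; injection this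
      have ha2 : a2 = b := by
        have := ruleA _ hRT' (by rw [mk2_fst]; simp)
        rw [mk2_fst] at this; injection this
      have hb1 : b1 = c := I2 x α y b1 a1 c d hαx.symm hxy hαy
        (mk2_swap α x a1 b1 hαx ▸ hRT) hR3T
      have hb2 : b2 = c := I2 x α y b2 a2 c d hαx.symm hxy hαy
        (mk2_swap α x a2 b2 hαx ▸ hRT') hR3T
      rw [ha1, ha2, hb1, hb2]
    have hfαy : (fib T α y).card ≤ 1 := by
      apply Finset.card_le_one.2
      intro R hR R' hR'
      obtain ⟨hRT, a1, b1, rfl⟩ := hnormfib α y hαy R hR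
      obtain ⟨hRT', a2, b2, rfl⟩ := hnormfib α y hαy R' hR'
      have ha1 : a1 = b := by
        have := ruleA _ hRT (by rw [mk2_fst]; simp)
        rw [mk2_fst] at this; injection this
      have ha2 : a2 = b := by
        have := ruleA _ hRT' (by rw [mk2_fst]; simp)
        rw [mk2_fst] at this; injection this
      have hb1 : b1 = d := I2 y α x b1 a1 d c hαy.symm hxy.symm hαx
        (mk2_swap α y a1 b1 hαy ▸ hRT) (mk2_swap x y c d hxy ▸ hR3T)
      have hb2 : b2 = d := I2 y α x b2 a2 d c hαy.symm hxy.symm hαx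
        (mk2_swap α y a2 b2 hαy ▸ hRT') (mk2_swap x y c d hxy ▸ hR3T)
      rw [ha1, ha2, hb1, hb2]
    have h6 : T.card = 6 → False := by
      intro hc
      have hxy2 : 1 < (fib T x y).card := by omega
      obtain ⟨R4, hR4, R5, hR5, hne45⟩ := Finset.one_lt_card.1 hxy2
      obtain ⟨hR4T, c1, d1, rfl⟩ := hnormfib x y hxy R4 hR4
      obtain ⟨hR5T, c2, d2, rfl⟩ := hnormfib x y hxy R5 hR5
      have hvne : ¬(c1 = c2 ∧ d1 = d2) := fun ⟨h1, h2⟩ => hne45 (by rw [h1, h2])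
      have hnanti : ¬(c2 = !c1 ∧ d2 = !d1) := by
        rintro ⟨rfl, rfl⟩
        exact I1 x y c1 d1 hxy hR4T hR5T
      rcases bool_cases2 c1 c2 d1 d2 hvne hnanti with ⟨rfl, rfl⟩ | ⟨rfl, rfl⟩
      · -- agree at x: fib T α y is empty
        have hempty : (fib T α y).card = 0 := by
          rw [Finset.card_eq_zero, Finset.eq_empty_iff_forall_notMem]
          intro R hR
          obtain ⟨hRT, a1, e1, rfl⟩ := hnormfib α y hαy R hR
          have he1 : e1 = d1 := I2 y α x e1 a1 d1 c2 hαy.symm hxy.symm hαx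
            (mk2_swap α y a1 e1 hαy ▸ hRT) (mk2_swap x y c2 d1 hxy ▸ hR4T)
          have he2 : e1 = !d1 := I2 y α x e1 a1 (!d1) c2 hαy.symm hxy.symm hαx
            (mk2_swap α y a1 e1 hαy ▸ hRT) (mk2_swap x y c2 (!d1) hxy ▸ hR5T)
          rw [he1] at he2
          exact bool_not_self d1 he2
        omega
      · -- agree at y: fib T α x is empty
        have hempty : (fib T α x).card = 0 := by
          rw [Finset.card_eq_zero, Finset.eq_empty_iff_forall_notMem]
          intro R hR
          obtain ⟨hRT, a1, e1, rfl⟩ := hnormfib α x hαx R hR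
          have he1 : e1 = c1 := I2 x α y e1 a1 c1 d2 hαx.symm hxy hαy
            (mk2_swap α x a1 e1 hαx ▸ hRT) hR4T
          have he2 : e1 = !c1 := I2 x α y e1 a1 (!c1) d2 hαx.symm hxy hαy
            (mk2_swap α x a1 e1 hαx ▸ hRT) hR5T
          rw [he1] at he2
          exact bool_not_self c1 he2
        omega
    exact ⟨by omega, fun hc => (h6 hc).elim⟩


include h2 I1 I2 in
theorem core : T.card ≤ 6 ∧ (T.card = 6 →
    (∃ i b, T = facetF i b) ∨ (∃ v : Vertex 4, T = starF v)) := by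
  have h6 : (Finset.univ.powersetCard 2 : Finset (Finset (Fin 4))).card = 6 := by
    rw [Finset.card_powersetCard]
    rfl
  by_cases hinj : ∀ R ∈ T, ∀ R' ∈ T, sl R = sl R' → R = R'
  · have hmap : ∀ R ∈ T, sl R ∈ Finset.univ.powersetCard 2 := by
      intro R hR
      rw [Finset.mem_powersetCard]
      exact ⟨Finset.subset_univ _, sl_card2 R (h2 R hR)⟩
    have hinj' : Set.InjOn sl ↑T := by
      intro R hR R' hR' h
      exact hinj R (by simpa using hR) R' (by simpa using hR') h
    have hbound : T.card ≤ 6 := by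
      have := Finset.card_le_card_of_injOn sl hmap hinj'
      omega
    refine ⟨hbound, fun hc => ?_⟩
    right
    have himg : T.image sl = Finset.univ.powersetCard 2 := by
      apply Finset.eq_of_subset_of_card_le
      · intro s hs
        obtain ⟨R, hR, rfl⟩ := Finset.mem_image.1 hs
        exact hmap R hR
      · rw [h6, Finset.card_image_of_injOn hinj', hc]
    have hk : ∀ k : Fin 4, ∃ R, R ∈ T ∧ R k ≠ none := by
      intro k
      have hkl : k ≠ (if k = 0 then 1 else 0 : Fin 4) := by
        by_cases h0 : k = 0
        · subst h0; decide
        · simp only [h0, if_false]; exact h0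
      have hmem : ({k, if k = 0 then 1 else 0} : Finset (Fin 4)) ∈
          Finset.univ.powersetCard 2 := by
        rw [Finset.mem_powersetCard]
        exact ⟨Finset.subset_univ _, Finset.card_pair hkl⟩
      rw [← himg] at hmem
      obtain ⟨R, hR, hsl⟩ := Finset.mem_image.1 hmem
      refine ⟨R, hR, ?_⟩
      have hin : k ∈ sl R := by rw [hsl]; exact Finset.mem_insert_self _ _
      simpa [sl] using hin
    choose f hfT hfk using hk
    have agree : ∀ R ∈ T, ∀ R' ∈ T, ∀ k : Fin 4, R k ≠ none → R' k ≠ none → R k = R' k := by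
      intro R hR R' hR' k hk1 hk2
      obtain ⟨u, c, d, huk, hre⟩ := norm1 R k (h2 R hR) hk1
      obtain ⟨u', c', d', huk', hre'⟩ := norm1 R' k (h2 R' hR') hk2
      by_cases huu : u = u'
      · have : R = R' := hinj R hR R' hR'
          (by rw [hre, hre', huu, sl_mk2 k u' c d huk'.symm, sl_mk2 k u' c' d' huk'.symm])
        rw [this]
      · rw [hre, hre', mk2_fst, mk2_fst]
        exact congrArg some
          (I2 k u u' c d c' d' huk.symm huk'.symm huu (hre ▸ hR) (hre' ▸ hR'))
    refine ⟨fun k => (f k k).getD true, ?_⟩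
    apply Finset.eq_of_subset_of_card_le
    · intro R hR
      rw [mem_starF]
      refine ⟨h2 R hR, fun k hk1 => ?_⟩
      have hag := agree R hR (f k) (hfT k) k hk1 (hfk k)
      rw [hag]
      cases hfkk : f k k with
      | none => exact absurd hfkk (hfk k)
      | some c => rfl
    · rw [starF_card, hc]
  · push_neg at hinj
    obtain ⟨R, hR, R', hR', hsl, hRR⟩ := hinj
    obtain ⟨i, j, a, b, hij, rfl⟩ := exists_mk2 R (h2 R hR)
    obtain ⟨i', j', a', b', hij', rfl⟩ := exists_mk2 R' (h2 R' hR')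
    rw [sl_mk2 i j a b hij, sl_mk2 i' j' a' b' hij'] at hsl
    have hG : ∃ a2 b2, mk2 i' j' a' b' = mk2 i j a2 b2 := by
      rcases pair_eq i j i' j' hij hij' hsl.symm with ⟨h1, h2⟩ | ⟨h1, h2⟩
      · exact ⟨a', b', by rw [h1, h2]⟩
      · exact ⟨b', a', by rw [h1, h2, mk2_swap j i a' b' hij.symm]⟩
    obtain ⟨a2, b2, hR'eq⟩ := hG
    rw [hR'eq] at hR' hRR
    have hvne : ¬(a = a2 ∧ b = b2) := fun ⟨h1, h2⟩ => hRR (by rw [h1, h2])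
    have hnanti : ¬(a2 = !a ∧ b2 = !b) := fun ⟨h1, h2⟩ =>
      I1 i j a b hij hR (by rw [← h1, ← h2]; exact hR')
    rcases bool_cases2 a a2 b b2 hvne hnanti with ⟨hq1, hq2⟩ | ⟨hq1, hq2⟩
    · rw [hq1, hq2] at hR'
      have hkc := keyCase h2 I1 I2 i j hij a b hR hR'
      exact ⟨hkc.1, fun hc => Or.inl (hkc.2 hc)⟩
    · rw [hq1, hq2] at hR'
      have hswap1 : mk2 j i b a ∈ T := mk2_swap i j a b hij ▸ hR
      have hswap2 : mk2 j i b (!a) ∈ T := mk2_swap i j (!a) b hij ▸ hR'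
      have hkc := keyCase h2 I1 I2 j i hij.symm b a hswap1 hswap2
      exact ⟨hkc.1, fun hc => Or.inl (hkc.2 hc)⟩

end Key

/-- in a 4-set ridge cover of `C^4` with no set containing antipodal
edges, every set has exactly six ridges and is the set of ridges of a facet or an
asterisk set. -/
theorem six_ridges_per_set (A : Fin 4 → Set (Face 4))
    (hridges : ∀ i R, R ∈ A i → IsKFace R 2)
    (hcover : ∀ R : Face 4, IsKFace R 2 → ∃ i, R ∈ A i)
    (hanti : ∀ i, ¬ ∃ e e' : Face 4, IsKFace e 1 ∧ Antipodal e e' ∧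
      SetContains (A i) e ∧ SetContains (A i) e') :
    ∀ i, (A i).ncard = 6 ∧
      ((∃ F : Face 4, IsKFace F 3 ∧ A i = {R | IsKFace R 2 ∧ Subface R F}) ∨
       (∃ v : Vertex 4, A i = {R | IsKFace R 2 ∧ VMem v R})) := by
  have key : ∀ j : Fin 4, ∃ Tf : Finset (Face 4), ↑Tf = A j ∧ Tf.card ≤ 6 ∧
      (Tf.card = 6 → (∃ α b, Tf = facetF α b) ∨ ∃ v : Vertex 4, Tf = starF v) := by
    intro j
    have hfin : (A j).Finite := Set.Finite.subset (Finset.finite_toSet Ridges)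
      (fun R hR => by rw [Finset.mem_coe, mem_Ridges]; exact hridges j R hR)
    refine ⟨hfin.toFinset, hfin.coe_toFinset, ?_⟩
    have hmem : ∀ R : Face 4, R ∈ hfin.toFinset ↔ R ∈ A j := fun R => hfin.mem_toFinset
    have h2 : ∀ R ∈ hfin.toFinset, IsKFace R 2 := fun R hR => hridges j R ((hmem R).1 hR)
    have I1 : ∀ (i' j' : Fin 4) (a b : Bool), i' ≠ j' → mk2 i' j' a b ∈ hfin.toFinset →
        mk2 i' j' (!a) (!b) ∈ hfin.toFinset → False := by
      intro i' j' a b hne hm1 hm2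
      obtain ⟨e, he1, he2, he3⟩ := I1e i' j' a b hne
      exact hanti j ⟨e, neg e, he1, anti_neg e,
        ⟨mk2 i' j' a b, (hmem _).1 hm1, he2⟩, ⟨mk2 i' j' (!a) (!b), (hmem _).1 hm2, he3⟩⟩
    have I2 : ∀ (i' j' l : Fin 4) (a b c d : Bool), i' ≠ j' → i' ≠ l → j' ≠ l →
        mk2 i' j' a b ∈ hfin.toFinset → mk2 i' l c d ∈ hfin.toFinset → a = c := by
      intro i' j' l a b c d h1 h2' h3 hm1 hm2
      by_contra hac
      rw [bool_ne' a c hac] at hm2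
      obtain ⟨e, he1, he2, he3⟩ := I2e i' j' l a b d h1 h2' h3
      exact hanti j ⟨e, neg e, he1, anti_neg e,
        ⟨_, (hmem _).1 hm1, he2⟩, ⟨_, (hmem _).1 hm2, he3⟩⟩
    exact core h2 I1 I2
  choose T hTA hT6 hTcl using key
  have hcov : Ridges ⊆ T 0 ∪ T 1 ∪ T 2 ∪ T 3 := by
    intro R hR
    obtain ⟨j, hj⟩ := hcover R ((mem_Ridges R).1 hR)
    have hjm : R ∈ T j := by rw [← Finset.mem_coe, hTA j]; exact hj
    simp only [Finset.mem_union]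
    fin_cases j
    · exact Or.inl (Or.inl (Or.inl hjm))
    · exact Or.inl (Or.inl (Or.inr hjm))
    · exact Or.inl (Or.inr hjm)
    · exact Or.inr hjm
  have hsum : 24 ≤ (T 0).card + (T 1).card + (T 2).card + (T 3).card := by
    have h1 := Finset.card_le_card hcov
    have hu2 := Finset.card_union_le (T 0 ∪ T 1 ∪ T 2) (T 3)
    have hu3 := Finset.card_union_le (T 0 ∪ T 1) (T 2)
    have hu4 := Finset.card_union_le (T 0) (T 1)
    rw [ridges_card] at h1
    omega
  have hcard : ∀ j, (T j).card = 6 := by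
    have c0 := hT6 0
    have c1 := hT6 1
    have c2 := hT6 2
    have c3 := hT6 3
    have e0 : (T 0).card = 6 := by omega
    have e1 : (T 1).card = 6 := by omega
    have e2 : (T 2).card = 6 := by omega
    have e3 : (T 3).card = 6 := by omega
    intro j
    fin_cases j
    · exact e0
    · exact e1
    · exact e2
    · exact e3
  intro i
  constructor
  · rw [← hTA i, Set.ncard_coe_finset]
    exact hcard i
  · rcases hTcl i (hcard i) with ⟨α, b, hf⟩ | ⟨v, hs⟩
    · left
      refine ⟨mk1 α b, mk1_face3 α b, ?_⟩
      rw [← hTA i, hf]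
      ext R
      rw [Finset.mem_coe, mem_facetF R α b]
      simp only [Set.mem_setOf_eq]
      rw [subface_mk1 R α b]
    · right
      refine ⟨v, ?_⟩
      rw [← hTA i, hs]
      ext R
      rw [Finset.mem_coe, mem_starF R v]
      simp only [Set.mem_setOf_eq]
      rw [vmem_iff R v]
end

section
/- For d ≥ 6, there exists a cover of the ridges of the d-cube by d sets of ridges such that no set contains a pair of antipodal (d-3)-faces; consequently the guaranteed antipodality dimension k(d) = d-4 for d-set ridge covers is sharp for d ≥ 6. -/
open Cube

/-- Sunflower family of 3-subsets of `ℕ`, `d` pairwise distinct, all containing `0`. -/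
def SS (d i : ℕ) : Finset ℕ :=
  if i + 4 ≤ d then {0, 1, i + 2} else {0, 2, i + 6 - d}

lemma zero_mem_SS (d i : ℕ) : 0 ∈ SS d i := by
  unfold SS; split <;> simp

lemma SS_lt (d i : ℕ) (hd : 6 ≤ d) (hi : i < d) : ∀ x ∈ SS d i, x < d := by
  unfold SS; split <;> intro x hx <;> simp at hx <;> omega

lemma card_SS (d i : ℕ) (hd : 6 ≤ d) (hi : i < d) : (SS d i).card = 3 := by
  unfold SS; split
  · rw [Finset.card_insert_of_notMem (by simp <;> omega),
      Finset.card_insert_of_notMem (by simp <;> omega), Finset.card_singleton]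
  · rw [Finset.card_insert_of_notMem (by simp <;> omega),
      Finset.card_insert_of_notMem (by simp <;> omega), Finset.card_singleton]

lemma SS_ne (d i j : ℕ) (hd : 6 ≤ d) (hi : i < d) (hj : j < d) (hij : i ≠ j) :
    SS d i ≠ SS d j := by
  intro h
  unfold SS at h
  split_ifs at h with h1 h2 h2
  · have : i + 2 ∈ ({0, 1, j + 2} : Finset ℕ) := h ▸ (by simp)
    simp at this; omega
  · have : (1 : ℕ) ∈ ({0, 2, j + 6 - d} : Finset ℕ) := h ▸ (by simp)
    simp at this; omega
  · have : (1 : ℕ) ∈ ({0, 2, i + 6 - d} : Finset ℕ) := h ▸ (by simp)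
    simp at this; omega
  · have : i + 6 - d ∈ ({0, 2, j + 6 - d} : Finset ℕ) := h ▸ (by simp)
    simp at this; omega

lemma SS_diff (d i j : ℕ) (hd : 6 ≤ d) (hi : i < d) (hj : j < d) (hij : i ≠ j) :
    ∃ x, x < d ∧ x ∈ SS d i ∧ x ∉ SS d j := by
  by_contra h
  push_neg at h
  have hsub : SS d i ⊆ SS d j := by
    intro x hx
    exact (h x (SS_lt d i hd hi x hx) hx)
  have := Finset.eq_of_subset_of_card_le hsub
    (by rw [card_SS d i hd hi, card_SS d j hd hj])
  exact SS_ne d i j hd hi hj hij this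

lemma SS_avoid (d i j : ℕ) (hd : 6 ≤ d) (hi : i < d) (hj : j < d) :
    ∃ x, x < d ∧ x ∉ SS d i ∧ x ∉ SS d j := by
  have hU : (SS d i ∪ SS d j).card ≤ 5 := by
    have h1 := Finset.card_union_add_card_inter (SS d i) (SS d j)
    have h2 : 1 ≤ (SS d i ∩ SS d j).card := Finset.card_pos.mpr
      ⟨0, Finset.mem_inter.mpr ⟨zero_mem_SS d i, zero_mem_SS d j⟩⟩
    rw [card_SS d i hd hi, card_SS d j hd hj] at h1
    omega
  have h6 : (Finset.range 6).card ≤ (Finset.range 6 \ (SS d i ∪ SS d j)).card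
      + (SS d i ∪ SS d j).card := Finset.card_le_card_sdiff_add_card
  rw [Finset.card_range] at h6
  have : (Finset.range 6 \ (SS d i ∪ SS d j)).Nonempty := Finset.card_pos.mp (by omega)
  obtain ⟨x, hx⟩ := this
  rw [Finset.mem_sdiff, Finset.mem_range, Finset.mem_union] at hx
  push_neg at hx
  exact ⟨x, by omega, hx.2.1, hx.2.2⟩

/-- Number of fixed coordinates of a `k`-face. -/
lemma fixed_card {d : ℕ} (F : Face d) (k : ℕ) (h : IsKFace F k) (hk : k ≤ d) :
    (Finset.univ.filter fun i => F i ≠ none).card = d - k := by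
  have h2 := Finset.card_filter_add_card_filter_not
    (s := (Finset.univ : Finset (Fin d))) (p := fun i => F i = none)
  rw [IsKFace] at h
  simp only [Finset.card_univ, Fintype.card_fin] at h2
  have : (Finset.univ.filter fun i => F i ≠ none).card
      = (Finset.univ.filter fun i => ¬ (F i = none)).card := rfl
  omega

lemma decide_of_prop_eq {P : Prop} [Decidable P] {b : Bool} (h : P = (b = true)) :
    decide P = b := by
  cases b
  · exact decide_eq_false (by rw [h]; simp)
  · exact decide_eq_true (by rw [h])

/-- for `d ≥ 6`, there is a `d`-set ridge cover of `C^d` in which no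
set contains a pair of antipodal `(d-3)`-faces (peaks); hence `k(d) = d - 4` is
sharp for `d ≥ 6`. -/
theorem sharpness_d_ge_six (d : ℕ) (hd : 6 ≤ d) :
    ∃ A : Fin d → Set (Face d),
      (∀ i R, R ∈ A i → IsKFace R (d - 2)) ∧
      (∀ R : Face d, IsKFace R (d - 2) → ∃ i, R ∈ A i) ∧
      (∀ i, ¬ ∃ P P' : Face d, IsKFace P (d - 3) ∧ Antipodal P P' ∧
        SetContains (A i) P ∧ SetContains (A i) P') := by
  classical
  refine ⟨fun t => {R | IsKFace R (d - 2) ∧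
      ∀ i : Fin d, R i = none ∨ R i = some (decide ((t : ℕ) ∈ SS d (i : ℕ)))},
      fun _ _ hR => hR.1, ?_, ?_⟩
  · -- covering
    intro R hR
    have hcard : (Finset.univ.filter fun i => R i ≠ none).card = 2 := by
      rw [fixed_card R (d - 2) hR (by omega)]; omega
    obtain ⟨i, j, hij, hIJ⟩ := Finset.card_eq_two.mp hcard
    have hi : R i ≠ none := by
      have : i ∈ Finset.univ.filter fun i => R i ≠ none := by rw [hIJ]; simp
      exact (Finset.mem_filter.mp this).2
    have hj : R j ≠ none := by
      have : j ∈ Finset.univ.filter fun i => R i ≠ none := by rw [hIJ]; simp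
      exact (Finset.mem_filter.mp this).2
    obtain ⟨b, hb⟩ := Option.ne_none_iff_exists'.mp hi
    obtain ⟨c, hc⟩ := Option.ne_none_iff_exists'.mp hj
    have hother : ∀ k : Fin d, k ≠ i → k ≠ j → R k = none := by
      intro k hki hkj
      by_contra hk
      have : k ∈ Finset.univ.filter fun i => R i ≠ none := by
        simp only [Finset.mem_filter, Finset.mem_univ, true_and]; exact hk
      rw [hIJ] at this
      simp only [Finset.mem_insert, Finset.mem_singleton] at this
      tauto
    have hvij : (i : ℕ) ≠ (j : ℕ) := fun h => hij (Fin.val_injective h)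
    -- choose the witness t according to the values b, c
    have key : ∃ x : ℕ, x < d ∧ ((x ∈ SS d (i : ℕ)) = (b = true))
        ∧ ((x ∈ SS d (j : ℕ)) = (c = true)) := by
      cases b <;> cases c
      · obtain ⟨x, h1, h2, h3⟩ := SS_avoid d i j hd i.isLt j.isLt
        exact ⟨x, h1, by simp [h2], by simp [h3]⟩
      · obtain ⟨x, h1, h2, h3⟩ := SS_diff d j i hd j.isLt i.isLt hvij.symm
        exact ⟨x, h1, by simp [h3], by simp [h2]⟩
      · obtain ⟨x, h1, h2, h3⟩ := SS_diff d i j hd i.isLt j.isLt hvij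
        exact ⟨x, h1, by simp [h2], by simp [h3]⟩
      · exact ⟨0, by omega, by simp [zero_mem_SS], by simp [zero_mem_SS]⟩
    obtain ⟨x, hx, hxi, hxj⟩ := key
    refine ⟨⟨x, hx⟩, hR, ?_⟩
    intro k
    rcases eq_or_ne k i with rfl | hki
    · right; rw [hb]; congr 1
      exact (decide_of_prop_eq hxi).symm
    · rcases eq_or_ne k j with rfl | hkj
      · right; rw [hc]; congr 1
        exact (decide_of_prop_eq hxj).symm
      · left; exact hother k hki hkj
  · -- no antipodal peaks in one set
    rintro t ⟨P, P', hP, hA, ⟨R, ⟨hRk, hRval⟩, hPR⟩, ⟨R', ⟨hRk', hRval'⟩, hPR'⟩⟩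
    have hFP : (Finset.univ.filter fun i => P i ≠ none).card = 3 := by
      rw [fixed_card P (d - 3) hP (by omega)]; omega
    have hFR : (Finset.univ.filter fun i => R i ≠ none).card = 2 := by
      rw [fixed_card R (d - 2) hRk (by omega)]; omega
    have hFR' : (Finset.univ.filter fun i => R' i ≠ none).card = 2 := by
      rw [fixed_card R' (d - 2) hRk' (by omega)]; omega
    have hsub : (Finset.univ.filter fun i => R i ≠ none)
        ⊆ (Finset.univ.filter fun i => P i ≠ none) := by
      intro k hk
      simp only [Finset.mem_filter, Finset.mem_univ, true_and] at hk ⊢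
      obtain ⟨b, hb⟩ := Option.ne_none_iff_exists'.mp hk
      rw [hPR k b hb]; simp
    have hsub' : (Finset.univ.filter fun i => R' i ≠ none)
        ⊆ (Finset.univ.filter fun i => P i ≠ none) := by
      intro k hk
      simp only [Finset.mem_filter, Finset.mem_univ, true_and] at hk ⊢
      obtain ⟨b, hb⟩ := Option.ne_none_iff_exists'.mp hk
      have := hPR' k b hb
      have h2 := hA k
      rw [this] at h2
      intro hnone
      rw [hnone] at h2
      simp at h2
    -- the fixed sets of R and R' intersect
    have hint : ∃ k, k ∈ (Finset.univ.filter fun i => R i ≠ none)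
        ∧ k ∈ (Finset.univ.filter fun i => R' i ≠ none) := by
      by_contra hc
      push_neg at hc
      have hdisj : Disjoint (Finset.univ.filter fun i => R i ≠ none)
          (Finset.univ.filter fun i => R' i ≠ none) :=
        Finset.disjoint_left.mpr fun {k} hk hk' => hc k hk hk'
      have hle : ((Finset.univ.filter fun i => R i ≠ none)
          ∪ (Finset.univ.filter fun i => R' i ≠ none)).card ≤ 3 := by
        rw [← hFP]
        exact Finset.card_le_card (Finset.union_subset hsub hsub')
      rw [Finset.card_union_of_disjoint hdisj, hFR, hFR'] at hle
      omega
    obtain ⟨k, hk1, hk2⟩ := hint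
    simp only [Finset.mem_filter, Finset.mem_univ, true_and] at hk1 hk2
    obtain ⟨b, hb⟩ := Option.ne_none_iff_exists'.mp hk1
    obtain ⟨b', hb'⟩ := Option.ne_none_iff_exists'.mp hk2
    have e1 : R k = some (decide ((t : ℕ) ∈ SS d (k : ℕ))) := by
      rcases hRval k with h | h
      · rw [h] at hb; exact absurd hb (by simp)
      · exact h
    have e1' : R' k = some (decide ((t : ℕ) ∈ SS d (k : ℕ))) := by
      rcases hRval' k with h | h
      · rw [h] at hb'; exact absurd hb' (by simp)
      · exact h
    have eP : P k = some (decide ((t : ℕ) ∈ SS d (k : ℕ))) := hPR k _ e1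
    have eP' : P' k = some (decide ((t : ℕ) ∈ SS d (k : ℕ))) := hPR' k _ e1'
    have := hA k
    rw [eP, eP'] at this
    simp at this
end
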